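/- Let κ ∈ ℝ with κ ≠ 0, λ > 0, and let n ≥ 1 be an integer. If u is an S⁺ₙ-solution of problem (P) for parameters (κ, λ), then the zeros of u in [0,1] are exactly the points j/n for j = 0, 1, …, n, and u(x + 1/n) = −u(x) for all x ∈ [0, 1 − 1/n]. In particular, all humps of u have the same shape, and the first hump is symmetric around 1/(2n). -/

import Mathlib

open Set Real Filter Topology

noncomputable section

/-- `u` is twice continuously differentiable on `[a,b]`, satisfies
`1 + κ (u')² > 0` and the ODE `-u'' = λ u (1 + κ (u')²)^(3/2)` on `[a,b]`. -/
def SolODE (κ lam : ℝ) (u : ℝ → ℝ) (a b : ℝ) : Prop :=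
  (∀ x ∈ Set.Icc a b, DifferentiableAt ℝ u x) ∧
  (∀ x ∈ Set.Icc a b, DifferentiableAt ℝ (deriv u) x) ∧
  ContinuousOn (deriv (deriv u)) (Set.Icc a b) ∧
  (∀ x ∈ Set.Icc a b, 0 < 1 + κ * (deriv u x) ^ 2) ∧
  (∀ x ∈ Set.Icc a b,
    -(deriv (deriv u) x) = lam * u x * (1 + κ * (deriv u x) ^ 2) ^ ((3 : ℝ) / 2))

/-- `u` is a solution of problem (P) on `[0,1]` with Dirichlet boundary conditions. -/
def SolP (κ lam : ℝ) (u : ℝ → ℝ) : Prop :=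
  SolODE κ lam u 0 1 ∧ u 0 = 0 ∧ u 1 = 0

/-- `u` is an `S⁺ₙ`-solution of problem (P): a nontrivial solution with exactly
`n - 1` zeros in `(0,1)`, all zeros in `[0,1]` simple, and positive near `0`. -/
def SPlus (κ lam : ℝ) (n : ℕ) (u : ℝ → ℝ) : Prop :=
  SolP κ lam u ∧
  (∃ x ∈ Set.Icc (0 : ℝ) 1, u x ≠ 0) ∧
  {x ∈ Set.Ioo (0 : ℝ) 1 | u x = 0}.ncard = n - 1 ∧
  (∀ τ ∈ Set.Icc (0 : ℝ) 1, u τ = 0 → deriv u τ ≠ 0) ∧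
  (∃ δ > 0, ∀ x ∈ Set.Ioo (0 : ℝ) δ, 0 < u x)

/- ## auxiliary lemmas -/

lemma solODE_mono' {κ lam : ℝ} {u : ℝ → ℝ} {a b p q : ℝ}
    (hu : SolODE κ lam u a b) (h : Set.Icc p q ⊆ Set.Icc a b) :
    SolODE κ lam u p q :=
  ⟨fun x hx => hu.1 x (h hx), fun x hx => hu.2.1 x (h hx), hu.2.2.1.mono h,
   fun x hx => hu.2.2.2.1 x (h hx), fun x hx => hu.2.2.2.2 x (h hx)⟩

lemma icc_sub_pos' {κ a2 b2 y : ℝ} (ha : 0 < 1 + κ * a2 ^ 2) (hb : 0 < 1 + κ * b2 ^ 2)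
    (h1 : a2 ≤ y) (h2 : y ≤ b2) : 0 < 1 + κ * y ^ 2 := by
  rcases le_or_gt κ 0 with hκ | hκ
  · rcases le_or_gt 0 y with hy | hy
    · have h3 : y ^ 2 ≤ b2 ^ 2 := pow_le_pow_left₀ hy h2 2
      nlinarith [mul_nonneg (neg_nonneg.2 hκ) (sub_nonneg.2 h3)]
    · have h3 : y ^ 2 ≤ a2 ^ 2 := by
        nlinarith [mul_nonneg (sub_nonneg.2 h1) (by linarith : (0:ℝ) ≤ -(y + a2))]
      nlinarith [mul_nonneg (neg_nonneg.2 hκ) (sub_nonneg.2 h3)]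
  · nlinarith [sq_nonneg y]

lemma solODE_unique' {κ lam : ℝ} {u w : ℝ → ℝ} {p q c : ℝ}
    (hc : c ∈ Set.Icc p q)
    (hu : SolODE κ lam u p q) (hw : SolODE κ lam w p q)
    (h0 : u c = w c) (h1 : deriv u c = deriv w c) :
    Set.EqOn u w (Set.Icc p q) := by
  obtain ⟨hud, hud2, hucont2, hupos, huode⟩ := hu
  obtain ⟨hwd, hwd2, hwcont2, hwpos, hwode⟩ := hw
  set f : ℝ × ℝ → ℝ × ℝ :=
    fun z => (z.2, -(lam * z.1 * (1 + κ * z.2 ^ 2) ^ ((3:ℝ)/2))) with hf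
  set G : Set (ℝ × ℝ) := {z | 0 < 1 + κ * z.2 ^ 2} with hG
  have hGopen : IsOpen G := isOpen_lt continuous_const (by fun_prop)
  have hfc : ∀ z ∈ G, ContDiffAt ℝ 1 f z := by
    intro z hz
    have hbase : ContDiffAt ℝ 1 (fun z : ℝ × ℝ => 1 + κ * z.2 ^ 2) z :=
      (contDiff_const.add (contDiff_const.mul (contDiff_snd.pow 2))).contDiffAt
    have hr : ContDiffAt ℝ 1 (fun z : ℝ × ℝ => (1 + κ * z.2 ^ 2) ^ ((3:ℝ)/2)) z :=
      hbase.rpow_const_of_ne (ne_of_gt hz)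
    exact ContDiffAt.prodMk contDiff_snd.contDiffAt
      (((contDiffAt_const.mul contDiff_fst.contDiffAt).mul hr).neg)
  set Fu : ℝ → ℝ × ℝ := fun x => (u x, deriv u x) with hFu
  set Fw : ℝ → ℝ × ℝ := fun x => (w x, deriv w x) with hFw
  have hFud : ∀ x ∈ Set.Icc p q, HasDerivAt Fu (f (Fu x)) x := by
    intro x hx
    have h1 := (hud x hx).hasDerivAt
    have h2 := (hud2 x hx).hasDerivAt
    have he : f (Fu x) = (deriv u x, deriv (deriv u) x) :=
      Prod.ext rfl (by have := huode x hx; simp only [hf, hFu, hFw]; linarith)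
    rw [he]; exact h1.prodMk h2
  have hFwd : ∀ x ∈ Set.Icc p q, HasDerivAt Fw (f (Fw x)) x := by
    intro x hx
    have h1 := (hwd x hx).hasDerivAt
    have h2 := (hwd2 x hx).hasDerivAt
    have he : f (Fw x) = (deriv w x, deriv (deriv w) x) :=
      Prod.ext rfl (by have := hwode x hx; simp only [hf, hFu, hFw]; linarith)
    rw [he]; exact h1.prodMk h2
  have hFucont : ContinuousOn Fu (Set.Icc p q) := fun x hx =>
    (((hud x hx).continuousAt).prodMk ((hud2 x hx).continuousAt)).continuousWithinAt
  have hFwcont : ContinuousOn Fw (Set.Icc p q) := fun x hx =>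
    (((hwd x hx).continuousAt).prodMk ((hwd2 x hx).continuousAt)).continuousWithinAt
  have hne : (Set.Icc p q).Nonempty := ⟨c, hc⟩
  have hA1c : IsCompact (u '' Set.Icc p q ∪ w '' Set.Icc p q) :=
    (isCompact_Icc.image_of_continuousOn
        (fun x hx => (hud x hx).continuousAt.continuousWithinAt)).union
      (isCompact_Icc.image_of_continuousOn
        (fun x hx => (hwd x hx).continuousAt.continuousWithinAt))
  have hA2c : IsCompact (deriv u '' Set.Icc p q ∪ deriv w '' Set.Icc p q) :=
    (isCompact_Icc.image_of_continuousOn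
        (fun x hx => (hud2 x hx).continuousAt.continuousWithinAt)).union
      (isCompact_Icc.image_of_continuousOn
        (fun x hx => (hwd2 x hx).continuousAt.continuousWithinAt))
  obtain ⟨a1, ha1⟩ := hA1c.exists_isLeast (.inl (hne.image u))
  obtain ⟨b1, hb1⟩ := hA1c.exists_isGreatest (.inl (hne.image u))
  obtain ⟨a2, ha2⟩ := hA2c.exists_isLeast (.inl (hne.image (deriv u)))
  obtain ⟨b2, hb2⟩ := hA2c.exists_isGreatest (.inl (hne.image (deriv u)))
  have hpos2 : ∀ y ∈ deriv u '' Set.Icc p q ∪ deriv w '' Set.Icc p q,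
      0 < 1 + κ * y ^ 2 := by
    rintro y (⟨t, ht, rfl⟩ | ⟨t, ht, rfl⟩)
    · exact hupos t ht
    · exact hwpos t ht
  set s : Set (ℝ × ℝ) := Set.Icc (a1, a2) (b1, b2) with hs
  have hsG : s ⊆ G := by
    rintro ⟨z1, z2⟩ ⟨hzl, hzr⟩
    rw [Prod.mk_le_mk] at hzl hzr
    exact icc_sub_pos' (hpos2 a2 ha2.1) (hpos2 b2 hb2.1) hzl.2 hzr.2
  have hscomp : IsCompact s := isCompact_Icc
  have hsconv : Convex ℝ s := convex_Icc _ _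
  have hmemu : ∀ t ∈ Set.Icc p q, Fu t ∈ s := fun t ht =>
    ⟨Prod.mk_le_mk.2 ⟨ha1.2 (.inl ⟨t, ht, rfl⟩), ha2.2 (.inl ⟨t, ht, rfl⟩)⟩,
      Prod.mk_le_mk.2 ⟨hb1.2 (.inl ⟨t, ht, rfl⟩), hb2.2 (.inl ⟨t, ht, rfl⟩)⟩⟩
  have hmemw : ∀ t ∈ Set.Icc p q, Fw t ∈ s := fun t ht =>
    ⟨Prod.mk_le_mk.2 ⟨ha1.2 (.inr ⟨t, ht, rfl⟩), ha2.2 (.inr ⟨t, ht, rfl⟩)⟩,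
      Prod.mk_le_mk.2 ⟨hb1.2 (.inr ⟨t, ht, rfl⟩), hb2.2 (.inr ⟨t, ht, rfl⟩)⟩⟩
  have hfderiv_cont : ContinuousOn (fderiv ℝ f) G :=
    ContDiffOn.continuousOn_fderiv_of_isOpen
      (fun z hz => (hfc z hz).contDiffWithinAt) hGopen le_rfl
  obtain ⟨C, hC⟩ := hscomp.exists_bound_of_continuousOn (hfderiv_cont.mono hsG)
  have hlip : LipschitzOnWith C.toNNReal f s := by
    apply hsconv.lipschitzOnWith_of_nnnorm_hasFDerivWithin_le
      (f' := fun z => fderiv ℝ f z)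
      (fun x hx =>
        (((hfc x (hsG hx)).differentiableAt one_ne_zero).hasFDerivAt).hasFDerivWithinAt)
    intro x hx
    have : ‖fderiv ℝ f x‖ ≤ (C.toNNReal : ℝ) := le_trans (hC x hx) (Real.le_coe_toNNReal C)
    exact_mod_cast this
  have hvlip : ∀ t : ℝ, LipschitzOnWith C.toNNReal ((fun _ => f) t) ((fun _ => s) t) :=
    fun _ => hlip
  have hinit : Fu c = Fw c := by
    simp only [hFu, hFw, Prod.mk.injEq]; exact ⟨h0, h1⟩
  have key : Set.EqOn Fu Fw (Set.Icc p q) := by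
    have hsub1 : Set.Icc c q ⊆ Set.Icc p q := Set.Icc_subset_Icc_left hc.1
    have hsub2 : Set.Icc p c ⊆ Set.Icc p q := Set.Icc_subset_Icc_right hc.2
    have hrt : Set.EqOn Fu Fw (Set.Icc c q) :=
      ODE_solution_unique_of_mem_Icc_right (fun t _ => hvlip t)
        (hFucont.mono hsub1)
        (fun t ht => (hFud t (hsub1 (Set.Ico_subset_Icc_self ht))).hasDerivWithinAt)
        (fun t ht => hmemu t (hsub1 (Set.Ico_subset_Icc_self ht)))
        (hFwcont.mono hsub1)
        (fun t ht => (hFwd t (hsub1 (Set.Ico_subset_Icc_self ht))).hasDerivWithinAt)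
        (fun t ht => hmemw t (hsub1 (Set.Ico_subset_Icc_self ht)))
        hinit
    have hlt : Set.EqOn Fu Fw (Set.Icc p c) :=
      ODE_solution_unique_of_mem_Icc_left (fun t _ => hvlip t)
        (hFucont.mono hsub2)
        (fun t ht => (hFud t (hsub2 (Set.Ioc_subset_Icc_self ht))).hasDerivWithinAt)
        (fun t ht => hmemu t (hsub2 (Set.Ioc_subset_Icc_self ht)))
        (hFwcont.mono hsub2)
        (fun t ht => (hFwd t (hsub2 (Set.Ioc_subset_Icc_self ht))).hasDerivWithinAt)
        (fun t ht => hmemw t (hsub2 (Set.Ioc_subset_Icc_self ht)))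
        hinit
    intro x hx
    rcases le_total x c with h | h
    · exact hlt ⟨hx.1, h⟩
    · exact hrt ⟨h, hx.2⟩
  intro x hx
  simpa only [hFu, hFw, Prod.mk.injEq] using congrArg Prod.fst (key hx)

lemma solODE_comp' {κ lam : ℝ} {u : ℝ → ℝ} (hu : SolODE κ lam u 0 1)
    {s σ d p q : ℝ} (hs : s * s = 1) (hσ : σ * σ = 1)
    (h : ∀ y ∈ Set.Icc p q, d + σ * y ∈ Set.Ioo (0:ℝ) 1) :
    SolODE κ lam (fun x => s * u (d + σ * x)) p q := by
  obtain ⟨hud, hud2, hucont2, hupos, huode⟩ := hu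
  set w : ℝ → ℝ := fun x => s * u (d + σ * x) with hw
  set g : ℝ → ℝ := fun y => s * σ * deriv u (d + σ * y) with hg
  have hinner : ∀ y : ℝ, HasDerivAt (fun y => d + σ * y) σ y := by
    intro y
    simpa using ((hasDerivAt_id y).const_mul σ).const_add d
  have hA : ∀ y : ℝ, d + σ * y ∈ Set.Icc (0:ℝ) 1 → HasDerivAt w (g y) y := by
    intro y hy
    have := ((hud _ hy).hasDerivAt.comp y (hinner y)).const_mul s
    simpa [hw, hg, mul_comm, mul_left_comm, mul_assoc] using this
  have hV : IsOpen {y : ℝ | d + σ * y ∈ Set.Ioo (0:ℝ) 1} :=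
    isOpen_Ioo.preimage (by fun_prop)
  have hB : ∀ x ∈ Set.Icc p q, deriv w =ᶠ[𝓝 x] g := by
    intro x hx
    filter_upwards [hV.mem_nhds (h x hx)] with y hy
    exact (hA y (Set.Ioo_subset_Icc_self hy)).deriv
  have hC : ∀ x ∈ Set.Icc p q, HasDerivAt g (s * deriv (deriv u) (d + σ * x)) x := by
    intro x hx
    have := ((hud2 _ (Set.Ioo_subset_Icc_self (h x hx))).hasDerivAt.comp x
      (hinner x)).const_mul (s * σ)
    have h2 : s * σ * (deriv (deriv u) (d + σ * x) * σ) = s * deriv (deriv u) (d + σ * x) := by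
      linear_combination (s * deriv (deriv u) (d + σ * x)) * hσ
    rw [h2] at this
    exact this
  have hE : ∀ x ∈ Set.Icc p q, deriv (deriv w) x = s * deriv (deriv u) (d + σ * x) := by
    intro x hx
    rw [(hB x hx).deriv_eq]
    exact (hC x hx).deriv
  have hDW : ∀ x ∈ Set.Icc p q, deriv w x = s * σ * deriv u (d + σ * x) := fun x hx =>
    (hA x (Set.Ioo_subset_Icc_self (h x hx))).deriv
  have hsq : ∀ x ∈ Set.Icc p q, (deriv w x) ^ 2 = (deriv u (d + σ * x)) ^ 2 := by
    intro x hx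
    rw [hDW x hx]
    linear_combination (σ * σ * (deriv u (d + σ * x)) ^ 2) * hs +
      ((deriv u (d + σ * x)) ^ 2) * hσ
  refine ⟨fun x hx => (hA x (Set.Ioo_subset_Icc_self (h x hx))).differentiableAt,
    fun x hx => ?_, ?_, fun x hx => ?_, fun x hx => ?_⟩
  · exact (Filter.EventuallyEq.differentiableAt_iff (hB x hx)).mpr (hC x hx).differentiableAt
  · apply ContinuousOn.congr (f := fun y => s * deriv (deriv u) (d + σ * y))
    · exact continuousOn_const.mul
        (hucont2.comp (by fun_prop : Continuous fun y : ℝ => d + σ * y).continuousOn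
          (fun y hy => Set.Ioo_subset_Icc_self (h y hy)))
    · intro x hx; exact hE x hx
  · rw [hsq x hx]
    exact hupos _ (Set.Ioo_subset_Icc_self (h x hx))
  · rw [hsq x hx, hE x hx]
    have := huode _ (Set.Ioo_subset_Icc_self (h x hx))
    have hww : w x = s * u (d + σ * x) := rfl
    rw [hww]
    linear_combination s * this

lemma eqOn_Icc_of_Ioo' {F G : ℝ → ℝ} {l r : ℝ} (hlr : l < r)
    (hF : ContinuousOn F (Set.Icc l r)) (hG : ContinuousOn G (Set.Icc l r))
    (h : Set.EqOn F G (Set.Ioo l r)) : Set.EqOn F G (Set.Icc l r) := by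
  intro x hx
  have hxcl : x ∈ closure (Set.Ioo l r) := by
    rw [closure_Ioo hlr.ne]; exact hx
  have hne : (𝓝[Set.Ioo l r] x).NeBot := mem_closure_iff_nhdsWithin_neBot.mp hxcl
  have h1 : Tendsto F (𝓝[Set.Ioo l r] x) (𝓝 (F x)) :=
    (hF x hx).mono Set.Ioo_subset_Icc_self
  have h2 : Tendsto G (𝓝[Set.Ioo l r] x) (𝓝 (G x)) :=
    (hG x hx).mono Set.Ioo_subset_Icc_self
  have h3 : Tendsto F (𝓝[Set.Ioo l r] x) (𝓝 (G x)) :=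
    h2.congr' (h.eventuallyEq_of_mem self_mem_nhdsWithin).symm
  exact tendsto_nhds_unique h1 h3

lemma reflect_eq' {κ lam : ℝ} {u : ℝ → ℝ} (hsol : SolODE κ lam u 0 1) {c : ℝ}
    (hc : c ∈ Set.Ioo (0:ℝ) 1) (hdc : deriv u c = 0) :
    ∀ x ∈ Set.Icc (max 0 (2*c-1)) (min 1 (2*c)), u x = u (2*c - x) := by
  have hcont : ContinuousOn u (Set.Icc 0 1) := fun x hx =>
    (hsol.1 x hx).continuousAt.continuousWithinAt
  set l := max 0 (2*c-1) with hl
  set r := min 1 (2*c) with hr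
  have hl0 : 0 ≤ l := le_max_left _ _
  have hl1 : 2*c - 1 ≤ l := le_max_right _ _
  have hr1 : r ≤ 1 := min_le_left _ _
  have hr2 : r ≤ 2*c := min_le_right _ _
  have hlc : l < c := max_lt hc.1 (by linarith [hc.2])
  have hcr : c < r := lt_min hc.2 (by linarith [hc.1])
  have hlr : l < r := hlc.trans hcr
  have hsub01 : Set.Icc l r ⊆ Set.Icc 0 1 := Set.Icc_subset_Icc hl0 hr1
  have hmapsIcc : ∀ y ∈ Set.Icc l r, 2*c - y ∈ Set.Icc (0:ℝ) 1 := by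
    intro y hy
    exact ⟨by linarith [hy.2], by linarith [hy.1]⟩
  have key : Set.EqOn u (fun x => (1:ℝ) * u (2*c + (-1) * x)) (Set.Icc l r) := by
    apply eqOn_Icc_of_Ioo' hlr (hcont.mono hsub01)
    · apply continuousOn_const.mul
      apply hcont.comp (by fun_prop : Continuous fun x : ℝ => 2*c + (-1)*x).continuousOn
      intro y hy
      have := hmapsIcc y hy
      simpa [show 2*c + (-1)*y = 2*c - y by ring] using this
    · intro x hx
      have hxIoo := hx
      have hpq : Set.Icc (min x c) (max x c) ⊆ Set.Ioo l r := fun y hy =>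
        ⟨lt_of_lt_of_le (lt_min hx.1 hlc) hy.1, lt_of_le_of_lt hy.2 (max_lt hx.2 hcr)⟩
      have hmaps : ∀ y ∈ Set.Icc (min x c) (max x c), 2*c + (-1)*y ∈ Set.Ioo (0:ℝ) 1 := by
        intro y hy
        obtain ⟨hy1, hy2⟩ := hpq hy
        exact ⟨by linarith, by linarith⟩
      have hwsol := solODE_comp' (s := 1) (σ := -1) (d := 2*c) hsol (by norm_num) (by norm_num) hmaps
      have husol := solODE_mono' hsol
        (Set.Icc_subset_Icc (le_trans hl0 (le_of_lt (lt_min hx.1 hlc)))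
          (le_trans (le_of_lt (max_lt hx.2 hcr)) hr1))
      have hcmem : c ∈ Set.Icc (min x c) (max x c) := ⟨min_le_right _ _, le_max_right _ _⟩
      have hval : u c = 1 * u (2*c + (-1) * c) := by
        rw [show 2*c + (-1)*c = c by ring, one_mul]
      have hder0 : HasDerivAt (fun x => (1:ℝ) * u (2*c + (-1)*x)) 0 c := by
        have hinner : HasDerivAt (fun y : ℝ => 2*c + (-1) * y) (-1) c := by
          simpa using ((hasDerivAt_id c).const_mul (-1:ℝ)).const_add (2*c)
        have houter : HasDerivAt u (deriv u c) (2*c + (-1)*c) := by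
          rw [show 2*c + (-1)*c = c by ring]
          exact (hsol.1 c ⟨hc.1.le, hc.2.le⟩).hasDerivAt
        have := (houter.comp c hinner).const_mul (1:ℝ)
        simpa [hdc] using this
      have hder : deriv u c = deriv (fun x => (1:ℝ) * u (2*c + (-1)*x)) c := by
        rw [hder0.deriv, hdc]
      exact solODE_unique' hcmem husol hwsol hval hder ⟨min_le_left _ _, le_max_left _ _⟩
  intro x hx
  have h2 : u x = 1 * u (2*c + (-1) * x) := key hx
  rw [h2, show 2*c + (-1)*x = 2*c - x by ring, one_mul]

/-- The constant `B = ∫₀¹ dθ/√(θ⁻⁴ - 1)`. -/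
def Bconst : ℝ := ∫ θ in (0 : ℝ)..1, 1 / Real.sqrt ((θ ^ 4)⁻¹ - 1)

/-- The sup-norm of `u` over `[0,1]`. -/
def supNorm (u : ℝ → ℝ) : ℝ := sSup ((fun x => |u x|) '' Set.Icc (0 : ℝ) 1)

/-- The time map `J(λ, ξ) = √(-κ) ∫₀¹ ξ/√(1 - (1 - λκξ²(1-θ²)/2)⁻²) dθ`. -/
def Jmap (κ lam ξ : ℝ) : ℝ :=
  Real.sqrt (-κ) *
    ∫ θ in (0 : ℝ)..1,
      ξ / Real.sqrt (1 - ((1 - lam * κ / 2 * ξ ^ 2 * (1 - θ ^ 2))⁻¹) ^ 2)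

theorem stmt4 (κ lam : ℝ) (hκ : κ ≠ 0) (hlam : 0 < lam) (n : ℕ) (hn : 1 ≤ n)
    (u : ℝ → ℝ) (hu : SPlus κ lam n u) :
    ({x ∈ Set.Icc (0 : ℝ) 1 | u x = 0} = {x : ℝ | ∃ j : ℕ, j ≤ n ∧ x = (j : ℝ) / n}) ∧
    (∀ x ∈ Set.Icc (0 : ℝ) (1 - 1 / n), u (x + 1 / n) = -u x) := by
  obtain ⟨⟨hsol, hu0, hu1⟩, hnt, hcard, hsimp, δ, hδ0, hδpos⟩ := hu
  have hcont : ContinuousOn u (Set.Icc 0 1) := fun x hx =>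
    (hsol.1 x hx).continuousAt.continuousWithinAt
  set m := min δ 1 with hm
  have hm0 : 0 < m := lt_min hδ0 one_pos
  have hm1 : m ≤ 1 := min_le_right _ _
  set Z : Set ℝ := Set.Icc m 1 ∩ u ⁻¹' {0} with hZ
  have hZc : IsClosed Z :=
    (hcont.mono (Set.Icc_subset_Icc (by linarith) le_rfl)).preimage_isClosed_of_isClosed
      isClosed_Icc isClosed_singleton
  have hZne : Z.Nonempty := ⟨1, ⟨hm1, le_rfl⟩, hu1⟩
  have hZbdd : BddBelow Z := ⟨m, fun x hx => hx.1.1⟩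
  set T := sInf Z with hTdef
  have hTZ : T ∈ Z := hZc.csInf_mem hZne hZbdd
  have hTm : m ≤ T := hTZ.1.1
  have hT1 : T ≤ 1 := hTZ.1.2
  have hT0 : 0 < T := lt_of_lt_of_le hm0 hTm
  have huT : u T = 0 := hTZ.2
  have hTmin : ∀ x, 0 < x → x < T → u x ≠ 0 := by
    intro x hx0 hxT hux
    rcases lt_or_ge x m with h | h
    · exact absurd hux (ne_of_gt (hδpos x ⟨hx0, lt_of_lt_of_le h (min_le_left _ _)⟩))
    · exact absurd (csInf_le hZbdd ⟨⟨h, le_trans hxT.le hT1⟩, hux⟩) (not_le.2 hxT)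
  clear hTZ hTm
  clear_value T
  clear hTdef hZc hZne hZbdd hZ
  -- critical point in (0, T)
  obtain ⟨c, hc, hdc⟩ := exists_deriv_eq_zero hT0
    (hcont.mono (Set.Icc_subset_Icc le_rfl hT1)) (hu0.trans huT.symm)
  have hc01 : c ∈ Set.Ioo (0:ℝ) 1 := ⟨hc.1, lt_of_lt_of_le hc.2 hT1⟩
  have hrefl := reflect_eq' hsol hc01 hdc
  -- 2c ≤ 1
  have h2c1 : 2*c ≤ 1 := by
    by_contra hh
    push_neg at hh
    have h1mem : (1:ℝ) ∈ Set.Icc (max 0 (2*c-1)) (min 1 (2*c)) :=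
      ⟨max_le zero_le_one (by linarith [hc01.2]), le_min le_rfl (by linarith)⟩
    have hid := hrefl 1 h1mem
    have hz : u (2*c - 1) = 0 := by rw [← hid, hu1]
    exact hTmin (2*c-1) (by linarith) (by linarith [hc.2, hc01.2]) hz
  have hIcc : Set.Icc (max 0 (2*c-1)) (min 1 (2*c)) = Set.Icc 0 (2*c) := by
    rw [max_eq_left (by linarith), min_eq_right (by linarith)]
  rw [hIcc] at hrefl
  have hu2c : u (2*c) = 0 := by
    have hid := hrefl 0 ⟨le_rfl, by linarith [hc.1]⟩
    rw [sub_zero] at hid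
    rw [← hid]; exact hu0
  have hT2c : T = 2*c := by
    rcases lt_trichotomy (2*c) T with h | h | h
    · exact absurd hu2c (hTmin (2*c) (by linarith [hc.1]) h)
    · exact h.symm
    · have hid := hrefl T ⟨hT0.le, h.le⟩
      have hz : u (2*c - T) = 0 := by rw [← hid]; exact huT
      exact absurd hz (hTmin (2*c - T) (by linarith) (by linarith [hc.2]))
  rw [← hT2c] at hrefl
  -- derivative antisymmetry : u'(T) = -u'(0)
  have hUD : UniqueDiffWithinAt ℝ (Set.Icc (0:ℝ) T) 0 := (uniqueDiffOn_Icc hT0) 0 ⟨le_rfl, hT0.le⟩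
  have hd0 : HasDerivWithinAt u (deriv u 0) (Set.Icc 0 T) 0 :=
    (hsol.1 0 ⟨le_rfl, zero_le_one⟩).hasDerivAt.hasDerivWithinAt
  have hinnerT : HasDerivAt (fun y : ℝ => T - y) (-1) 0 := by
    simpa using (hasDerivAt_id (0:ℝ)).const_sub T
  have houterT : HasDerivAt u (deriv u T) (T - 0) := by
    rw [sub_zero]; exact (hsol.1 T ⟨hT0.le, hT1⟩).hasDerivAt
  have hcompT : HasDerivAt (fun x => u (T - x)) (deriv u T * (-1)) 0 := houterT.comp 0 hinnerT
  have hgw : HasDerivWithinAt u (deriv u T * (-1)) (Set.Icc 0 T) 0 :=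
    hcompT.hasDerivWithinAt.congr (fun y hy => hrefl y hy) (hrefl 0 ⟨le_rfl, hT0.le⟩)
  have hDD : deriv u T = -(deriv u 0) := by
    have e1 := hd0.derivWithin hUD
    have e2 := hgw.derivWithin hUD
    rw [e1] at e2
    linarith
  -- shift identity
  have hshift : ∀ x ∈ Set.Icc 0 (1 - T), u (x + T) = -u x := by
    rcases eq_or_lt_of_le hT1 with hTeq | hTlt
    · intro x hx
      have hx0 : x = 0 := le_antisymm (by simpa [hTeq] using hx.2) hx.1
      rw [hx0, zero_add, huT, hu0, neg_zero]
    · have hkey : Set.EqOn u (fun x => (-1:ℝ) * u (T + 1 * x)) (Set.Icc 0 (1 - T)) := by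
        apply eqOn_Icc_of_Ioo' (by linarith)
        · exact hcont.mono (Set.Icc_subset_Icc le_rfl (by linarith))
        · apply continuousOn_const.mul
          apply hcont.comp (by fun_prop : Continuous fun x : ℝ => T + 1*x).continuousOn
          intro y hy
          constructor
          · have := hy.1; simp only; nlinarith
          · have := hy.2; simp only; nlinarith
        · intro x hx
          have hmaps : ∀ y ∈ Set.Icc 0 x, T + 1*y ∈ Set.Ioo (0:ℝ) 1 := by
            intro y hy
            exact ⟨by nlinarith [hy.1], by nlinarith [hy.2, hx.2]⟩
          have hwsol := solODE_comp' (s := -1) (σ := 1) (d := T) hsol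
            (by norm_num) (by norm_num) hmaps
          have husol := solODE_mono' hsol
            (Set.Icc_subset_Icc le_rfl (by linarith [hx.2] : x ≤ 1))
          have h0mem : (0:ℝ) ∈ Set.Icc 0 x := ⟨le_rfl, hx.1.le⟩
          have hval : u 0 = -1 * u (T + 1 * 0) := by
            rw [show T + 1*(0:ℝ) = T by ring, huT, hu0]; ring
          have hder : deriv u 0 = deriv (fun x => (-1:ℝ) * u (T + 1 * x)) 0 := by
            have hinner2 : HasDerivAt (fun y : ℝ => T + 1 * y) 1 0 := by
              simpa using ((hasDerivAt_id (0:ℝ)).const_mul (1:ℝ)).const_add T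
            have houter2 : HasDerivAt u (deriv u T) (T + 1 * 0) := by
              rw [show T + 1*(0:ℝ) = T by ring]
              exact (hsol.1 T ⟨hT0.le, hT1⟩).hasDerivAt
            have hcomp2 : HasDerivAt (fun x => (-1:ℝ) * u (T + 1 * x))
                ((-1) * (deriv u T * 1)) 0 := (houter2.comp 0 hinner2).const_mul (-1:ℝ)
            rw [hcomp2.deriv, hDD]; ring
          exact solODE_unique' h0mem husol hwsol hval hder ⟨hx.1.le, le_rfl⟩
      intro x hx
      have hthis : u x = -1 * u (T + 1 * x) := hkey hx
      rw [show T + 1*x = x + T by ring] at hthis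
      linarith [hthis]
  have claim3 : ∀ j : ℕ, (j:ℝ)*T ≤ 1 →
      u ((j:ℝ)*T) = 0 ∧ ∀ x, (j:ℝ)*T < x → x < ((j:ℝ)+1)*T → x < 1 → u x ≠ 0 := by
    intro j
    induction j with
    | zero =>
      intro _
      constructor
      · simpa using hu0
      · intro x h1 h2 _ hux
        have hx0 : 0 < x := by simpa using h1
        have hxT : x < T := by
          have h2' : x < ((0:ℝ)+1)*T := by exact_mod_cast h2
          linarith
        exact hTmin x hx0 hxT hux
    | succ j ih =>
      intro hj1
      push_cast at hj1 ⊢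
      have hjnn : (0:ℝ) ≤ (j:ℝ) := Nat.cast_nonneg j
      have hjT : (j:ℝ)*T ≤ 1 := by nlinarith
      obtain ⟨ihz, ihnz⟩ := ih hjT
      have hmem : (j:ℝ)*T ∈ Set.Icc 0 (1-T) := ⟨by positivity, by linarith⟩
      have hsh := hshift _ hmem
      rw [ihz] at hsh
      have hz : u (((j:ℝ)+1)*T) = 0 := by
        rw [show ((j:ℝ)+1)*T = (j:ℝ)*T + T by ring, hsh]; norm_num
      refine ⟨hz, ?_⟩
      intro x h1 h2 h3 hux
      have hymem : x - T ∈ Set.Icc 0 (1-T) := ⟨by nlinarith, by linarith⟩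
      have hsh2 := hshift _ hymem
      rw [show x - T + T = x by ring] at hsh2
      exact ihnz (x - T) (by linarith) (by linarith) (by linarith)
        (by linarith [hsh2, hux])
  obtain ⟨k, hk1, hkT, hk2⟩ : ∃ k : ℕ, 1 ≤ k ∧ (k:ℝ)*T ≤ 1 ∧ 1 < ((k:ℝ)+1)*T := by
    refine ⟨⌊1/T⌋₊, ?_, ?_, ?_⟩
    · exact Nat.le_floor (by rw [Nat.cast_one, le_div_iff₀ hT0, one_mul]; exact hT1)
    · have h := Nat.floor_le (by positivity : (0:ℝ) ≤ 1/T)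
      exact (le_div_iff₀ hT0).mp h
    · have h := Nat.lt_floor_add_one (1/T)
      rw [div_lt_iff₀ hT0] at h
      exact_mod_cast h
  have hkTeq : (k:ℝ)*T = 1 := by
    rcases eq_or_lt_of_le hkT with h | h
    · exact h
    · exfalso
      have hmem : 1 - T ∈ Set.Icc 0 (1-T) := ⟨by linarith, le_rfl⟩
      have h1T := hshift _ hmem
      rw [show 1 - T + T = (1:ℝ) by ring, hu1] at h1T
      obtain ⟨mm, rfl⟩ : ∃ mm, k = mm + 1 := ⟨k - 1, by omega⟩
      push_cast at h hk2
      have hmT : (mm:ℝ)*T ≤ 1 := by nlinarith [hT0, Nat.cast_nonneg (α := ℝ) mm]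
      exact (claim3 mm hmT).2 (1 - T) (by linarith) (by linarith) (by linarith [hT0])
        (by linarith [h1T])
  -- the zero set in (0,1) and the count
  have hinj : Function.Injective (fun j : ℕ => (j:ℝ)*T) := by
    intro a b hab
    simp only at hab
    have := mul_right_cancel₀ hT0.ne' hab
    exact_mod_cast this
  have floorlemma : ∀ x, 0 ≤ x → x ≤ 1 → u x = 0 → ∃ j : ℕ, j ≤ k ∧ x = (j:ℝ)*T := by
    intro x hx0 hx1 hux
    obtain ⟨j, hj1, hj2⟩ : ∃ j : ℕ, (j:ℝ)*T ≤ x ∧ x < ((j:ℝ)+1)*T := by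
      refine ⟨⌊x/T⌋₊, ?_, ?_⟩
      · have h := Nat.floor_le (div_nonneg hx0 hT0.le)
        exact (le_div_iff₀ hT0).mp h
      · have h := Nat.lt_floor_add_one (x/T)
        rw [div_lt_iff₀ hT0] at h
        exact_mod_cast h
    have hxj : x = (j:ℝ)*T := by
      rcases eq_or_lt_of_le hj1 with h | h
      · exact h.symm
      · exfalso
        rcases eq_or_lt_of_le hx1 with hx1e | hx1l
        · -- x = 1 : then j*T = 1, contradicting j*T < x = 1
          have e1 : (j:ℝ)*T ≤ (k:ℝ)*T := by rw [hkTeq]; linarith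
          have e2 : (k:ℝ)*T < ((j:ℝ)+1)*T := by rw [hkTeq]; rw [hx1e] at hj2; exact hj2
          have e3 : (j:ℝ) ≤ (k:ℝ) := le_of_mul_le_mul_right e1 hT0
          have e4 : (k:ℝ) < (j:ℝ)+1 := by
            have := (mul_lt_mul_iff_left₀ hT0).mp e2; linarith
          have e5 : j = k := by
            have e3' : j ≤ k := by exact_mod_cast e3
            have e4' : (k:ℕ) < j + 1 := by exact_mod_cast e4
            omega
          rw [e5, hkTeq, ← hx1e] at h
          exact lt_irrefl x h
        · exact absurd hux ((claim3 j (by linarith)).2 x h hj2 hx1l)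
    have hjk : j ≤ k := by
      have e1 : (j:ℝ)*T ≤ (k:ℝ)*T := by rw [hkTeq, ← hxj]; exact hx1
      have e3 : (j:ℝ) ≤ (k:ℝ) := le_of_mul_le_mul_right e1 hT0
      exact_mod_cast e3
    exact ⟨j, hjk, hxj⟩
  have hsetEq : {x ∈ Set.Ioo (0:ℝ) 1 | u x = 0}
      = ↑((Finset.Icc 1 (k-1)).image (fun j : ℕ => (j:ℝ)*T)) := by
    ext x
    simp only [Finset.coe_image, Set.mem_image, Finset.mem_coe, Finset.mem_Icc,
      Set.mem_setOf_eq, Set.mem_Ioo]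
    constructor
    · rintro ⟨⟨hx0, hx1⟩, hux⟩
      obtain ⟨j, hjk, hxj⟩ := floorlemma x hx0.le hx1.le hux
      refine ⟨j, ⟨?_, ?_⟩, hxj.symm⟩
      · rcases Nat.eq_zero_or_pos j with h0 | h0
        · exfalso; rw [h0] at hxj; norm_num at hxj; linarith
        · exact h0
      · have e1 : (j:ℝ)*T < (k:ℝ)*T := by rw [hkTeq, ← hxj]; exact hx1
        have e2 : (j:ℝ) < (k:ℝ) := (mul_lt_mul_iff_left₀ hT0).mp e1
        have e3 : j < k := by exact_mod_cast e2
        omega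
    · rintro ⟨j, ⟨hj1, hj2⟩, rfl⟩
      have hjk : j < k := by omega
      have hj1R : (1:ℝ) ≤ (j:ℝ) := by exact_mod_cast hj1
      have hjkR : (j:ℝ) < (k:ℝ) := by exact_mod_cast hjk
      have hlt := mul_lt_mul_of_pos_right hjkR hT0
      have hjT1 : (j:ℝ)*T ≤ 1 := by linarith
      have hpos : 0 < (j:ℝ)*T :=
        lt_of_lt_of_le hT0 (le_mul_of_one_le_left hT0.le hj1R)
      exact ⟨⟨hpos, by linarith⟩, (claim3 j hjT1).1⟩
  have hcard2 : {x ∈ Set.Ioo (0:ℝ) 1 | u x = 0}.ncard = k - 1 := by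
    rw [hsetEq, Set.ncard_coe_finset, Finset.card_image_of_injective _ hinj, Nat.card_Icc]
    omega
  have hkn : k = n := by
    rw [hcard] at hcard2
    omega
  have hn0 : (0:ℝ) < (n:ℝ) := by exact_mod_cast (by omega : 0 < n)
  have hTn : T = 1/(n:ℝ) := by
    rw [eq_div_iff hn0.ne']
    rw [hkn] at hkTeq
    linarith
  constructor
  · ext x
    simp only [Set.mem_setOf_eq, Set.mem_Icc]
    constructor
    · rintro ⟨⟨hx0, hx1⟩, hux⟩
      obtain ⟨j, hjk, hxj⟩ := floorlemma x hx0 hx1 hux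
      refine ⟨j, by omega, ?_⟩
      rw [hxj, hTn, mul_one_div]
    · rintro ⟨j, hj, rfl⟩
      have hjn : ((j:ℝ)/n) = (j:ℝ)*T := by rw [hTn, mul_one_div]
      have hjnR : (j:ℝ) ≤ (n:ℝ) := by exact_mod_cast hj
      have hjT1 : (j:ℝ)*T ≤ 1 := by
        rw [← hjn]
        exact div_le_one_of_le₀ hjnR hn0.le
      refine ⟨⟨by positivity, ?_⟩, ?_⟩
      · rw [div_le_one hn0]; exact hjnR
      · rw [hjn]; exact (claim3 j hjT1).1
  · intro x hx
    rw [← hTn] at hx ⊢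
    exact hshift x hx
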